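/- arXiv:1603.00187 — 2 statements merged into one kernel-verified Lean document; each statement's English description precedes it below -/
import Mathlib

section
/- Let Y = X₁ × ⋯ × X_t be a direct product of finite groups and let J ≤ Y be a subgroup such that the projection of J onto each factor Xᵢ is surjective. Then the quotient N_Y(J)/J is solvable (indeed of derived length at most t − 1). -/
universe u

open scoped commutatorElement

private lemma comm_aux_left {G : Type*} [Group G] (c : G) (hc : ∀ g, c * g = g * c)
    (z w : G) : ⁅c * z, w⁆ = ⁅z, w⁆ := by
  have hc' : c⁻¹ * w⁻¹ = w⁻¹ * c⁻¹ := by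
    rw [← mul_inv_rev, ← mul_inv_rev, hc]
  rw [commutatorElement_def, commutatorElement_def, mul_inv_rev]
  simp only [mul_assoc]
  rw [hc', hc]
  simp only [mul_assoc, inv_mul_cancel, mul_one]

private lemma comm_aux {G : Type*} [Group G] {a b x y : G}
    (ha : ∀ g, a * g = g * a) (hb : ∀ g, b * g = g * b) :
    ⁅a * x, b * y⁆ = ⁅x, y⁆ := by
  rw [comm_aux_left a ha x (b * y)]
  calc ⁅x, b * y⁆ = ⁅b * y, x⁆⁻¹ := (commutatorElement_inv _ _).symm
    _ = ⁅y, x⁆⁻¹ := by rw [comm_aux_left b hb y x]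
    _ = ⁅x, y⁆ := commutatorElement_inv _ _

/-- projection onto the first `t` coordinates -/
private def projCast {t : ℕ} (X : Fin (t + 1) → Type u) [∀ i, Group (X i)] :
    (∀ i, X i) →* ∀ i : Fin t, X i.castSucc :=
  MonoidHom.mk' (fun g i => g i.castSucc) fun _ _ => rfl

private lemma key_comm {t : ℕ} (X : Fin (t + 1) → Type u) [∀ i, Group (X i)]
    (J : Subgroup (∀ i, X i))
    (hsurj : J.map (Pi.evalMonoidHom X (Fin.last t)) = ⊤)
    {u v : ∀ i, X i} (hu : u ∈ (Subgroup.normalizer (J : Set (∀ i, X i)))) (hv : v ∈ (Subgroup.normalizer (J : Set (∀ i, X i))))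
    {j k : ∀ i, X i} (hj : j ∈ J) (hk : k ∈ J)
    (hju : ∀ i : Fin t, j i.castSucc = u i.castSucc)
    (hkv : ∀ i : Fin t, k i.castSucc = v i.castSucc) :
    ⁅u, v⁆ ∈ J := by
  set π := projCast X with hπdef
  set σ := Pi.evalMonoidHom X (Fin.last t) with hσdef
  have hsur : ∀ ξ : X (Fin.last t), ∃ x ∈ J, x (Fin.last t) = ξ := by
    intro ξ
    have hξ : ξ ∈ J.map σ := hsurj ▸ Subgroup.mem_top ξ
    obtain ⟨x, hx, hxe⟩ := hξ
    exact ⟨x, hx, hxe⟩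
  set B : Subgroup (∀ i, X i) := J ⊓ π.ker with hB
  set S : Subgroup (X (Fin.last t)) := B.map σ with hS
  have hSnormal : S.Normal := by
    constructor
    intro s hs ξ
    obtain ⟨c, hc, rfl⟩ := hs
    obtain ⟨x, hxJ, hxl⟩ := hsur ξ
    refine ⟨x * c * x⁻¹, ⟨J.mul_mem (J.mul_mem hxJ hc.1) (J.inv_mem hxJ), ?_⟩, ?_⟩
    · have hcker : π c = 1 := hc.2
      show π (x * c * x⁻¹) = 1
      rw [map_mul, map_mul, hcker, mul_one, map_inv, mul_inv_cancel]
    · show (x * c * x⁻¹) (Fin.last t) = ξ * σ c * ξ⁻¹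
      simp only [Pi.mul_apply, Pi.inv_apply, hxl]
      rfl
  haveI := hSnormal
  set Q := X (Fin.last t) ⧸ S with hQ
  set m : (∀ i, X i) →* Q := (QuotientGroup.mk' S).comp σ with hm
  have hcent : ∀ z, z ∈ (Subgroup.normalizer (J : Set (∀ i, X i))) → π z = 1 → ∀ g : Q, m z * g = g * m z := by
    intro z hz hzπ g
    obtain ⟨ξ, rfl⟩ := QuotientGroup.mk_surjective g
    have hmem : ⁅z (Fin.last t), ξ⁆ ∈ S := by
      obtain ⟨x, hxJ, hxl⟩ := hsur ξ
      refine ⟨z * x * z⁻¹ * x⁻¹, ⟨?_, ?_⟩, ?_⟩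
      · exact J.mul_mem ((Subgroup.mem_normalizer_iff.1 hz x).1 hxJ) (J.inv_mem hxJ)
      · show π (z * x * z⁻¹ * x⁻¹) = 1
        rw [map_mul, map_mul, map_mul, map_inv, map_inv, hzπ, inv_one, one_mul, mul_one,
          mul_inv_cancel]
      · show (z * x * z⁻¹ * x⁻¹) (Fin.last t) = ⁅z (Fin.last t), ξ⁆
        simp only [Pi.mul_apply, Pi.inv_apply, hxl, commutatorElement_def]
    have h1 : (⁅m z, (QuotientGroup.mk ξ : Q)⁆ : Q) = 1 := by
      have : (⁅m z, (QuotientGroup.mk ξ : Q)⁆ : Q)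
          = QuotientGroup.mk ⁅z (Fin.last t), ξ⁆ := by
        rw [show (QuotientGroup.mk ⁅z (Fin.last t), ξ⁆ : Q)
            = (QuotientGroup.mk' S) ⁅z (Fin.last t), ξ⁆ from rfl, map_commutatorElement]
        rfl
      rw [this]
      exact (QuotientGroup.eq_one_iff _).2 hmem
    exact commutatorElement_eq_one_iff_mul_comm.1 h1
  -- main computation
  have haN : u * j⁻¹ ∈ (Subgroup.normalizer (J : Set (∀ i, X i))) :=
    (Subgroup.normalizer (J : Set (∀ i, X i))).mul_mem hu ((Subgroup.normalizer (J : Set (∀ i, X i))).inv_mem (Subgroup.le_normalizer hj))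
  have hbN : v * k⁻¹ ∈ (Subgroup.normalizer (J : Set (∀ i, X i))) :=
    (Subgroup.normalizer (J : Set (∀ i, X i))).mul_mem hv ((Subgroup.normalizer (J : Set (∀ i, X i))).inv_mem (Subgroup.le_normalizer hk))
  have haπ : π (u * j⁻¹) = 1 :=
    funext fun i => show u i.castSucc * (j i.castSucc)⁻¹ = 1 by
      rw [hju i, mul_inv_cancel]
  have hbπ : π (v * k⁻¹) = 1 :=
    funext fun i => show v i.castSucc * (k i.castSucc)⁻¹ = 1 by
      rw [hkv i, mul_inv_cancel]
  set d := ⁅u, v⁆ * ⁅j, k⁆⁻¹ with hd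
  have hπuj : π u = π j := funext fun i => (hju i).symm
  have hπvk : π v = π k := funext fun i => (hkv i).symm
  have hdπ : π d = 1 := by
    rw [hd, map_mul, map_inv, map_commutatorElement, map_commutatorElement, hπuj, hπvk,
      mul_inv_cancel]
  have hmd : m d = 1 := by
    have hmu : m u = m (u * j⁻¹) * m j := by
      rw [← map_mul, inv_mul_cancel_right]
    have hmv : m v = m (v * k⁻¹) * m k := by
      rw [← map_mul, inv_mul_cancel_right]
    rw [hd, map_mul, map_inv, map_commutatorElement, map_commutatorElement, hmu, hmv,
      comm_aux (hcent _ haN haπ) (hcent _ hbN hbπ), mul_inv_cancel]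
  have hσd : σ d ∈ S := (QuotientGroup.eq_one_iff (σ d)).1 hmd
  obtain ⟨c, ⟨hcJ, hcπ⟩, hcσ⟩ := hσd
  have hcπ' : π c = 1 := hcπ
  have hdc : d = c := by
    funext i
    refine Fin.lastCases ?_ (fun i => ?_) i
    · exact hcσ.symm
    · have h1 : d i.castSucc = 1 := congrFun hdπ i
      have h2 : c i.castSucc = 1 := congrFun hcπ' i
      rw [h1, h2]
  have hjk : ⁅j, k⁆ ∈ J := by
    rw [commutatorElement_def]
    exact J.mul_mem (J.mul_mem (J.mul_mem hj hk) (J.inv_mem hj)) (J.inv_mem hk)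
  have : ⁅u, v⁆ = d * ⁅j, k⁆ := by rw [hd, inv_mul_cancel_right]
  rw [this, hdc]
  exact J.mul_mem hcJ hjk

private lemma derived_le : ∀ (t : ℕ) (X : Fin t → Type u) [∀ i, Group (X i)]
    (J : Subgroup (∀ i, X i)),
    (∀ i, J.map (Pi.evalMonoidHom X i) = ⊤) →
    ∃ n, ∀ g : (Subgroup.normalizer (J : Set (∀ i, X i))), g ∈ derivedSeries (↥(Subgroup.normalizer (J : Set (∀ i, X i)))) n → (g : ∀ i, X i) ∈ J := by
  intro t
  induction t with
  | zero =>
    intro X _ J _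
    refine ⟨0, fun g _ => ?_⟩
    have hg1 : (g : ∀ i, X i) = 1 := funext fun i : Fin 0 => i.elim0
    rw [hg1]; exact J.one_mem
  | succ t ih =>
    intro X _ J hsurj
    set π := projCast X with hπdef
    set J' : Subgroup (∀ i : Fin t, X i.castSucc) := J.map π with hJ'
    have hsurj' : ∀ i : Fin t, J'.map (Pi.evalMonoidHom (fun i : Fin t => X i.castSucc) i) = ⊤ := by
      intro i
      rw [hJ', Subgroup.map_map]
      have heq : (Pi.evalMonoidHom (fun i : Fin t => X i.castSucc) i).comp π
          = Pi.evalMonoidHom X i.castSucc := rfl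
      rw [heq, hsurj]
    obtain ⟨n, hn⟩ := ih (fun i : Fin t => X i.castSucc) J' hsurj'
    have hπnorm : ∀ g ∈ (Subgroup.normalizer (J : Set (∀ i, X i))), π g ∈ (Subgroup.normalizer (J' : Set (∀ i : Fin t, X i.castSucc))) := by
      intro g hg
      rw [Subgroup.mem_normalizer_iff]
      intro h
      constructor
      · rintro ⟨x, hx, rfl⟩
        exact ⟨g * x * g⁻¹, (Subgroup.mem_normalizer_iff.1 hg x).1 hx, by
          rw [map_mul, map_mul, map_inv]⟩
      · rintro ⟨x, hx, hxe⟩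
        refine ⟨g⁻¹ * x * g, (Subgroup.mem_normalizer_iff''.1 hg x).1 hx, ?_⟩
        rw [map_mul, map_mul, map_inv, hxe]
        group
    set φ : ↥(Subgroup.normalizer (J : Set (∀ i, X i))) →* ↥(Subgroup.normalizer (J' : Set (∀ i : Fin t, X i.castSucc))) :=
      (π.domRestrict (Subgroup.normalizer (J : Set (∀ i, X i)))).codRestrict (Subgroup.normalizer (J' : Set (∀ i : Fin t, X i.castSucc))) (fun g => hπnorm g g.2) with hφ
    have hmap := map_derivedSeries_le_derivedSeries φ n
    refine ⟨n + 1, fun g hg => ?_⟩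
    have hDle : derivedSeries (↥(Subgroup.normalizer (J : Set (∀ i, X i)))) (n + 1) ≤ J.subgroupOf (Subgroup.normalizer (J : Set (∀ i, X i))) := by
      rw [derivedSeries_succ, Subgroup.commutator_le]
      intro g₁ hg₁ g₂ hg₂
      rw [Subgroup.mem_subgroupOf]
      have hπ1 : π (↑g₁ : ∀ i, X i) ∈ J' := hn (φ g₁) (hmap ⟨g₁, hg₁, rfl⟩)
      have hπ2 : π (↑g₂ : ∀ i, X i) ∈ J' := hn (φ g₂) (hmap ⟨g₂, hg₂, rfl⟩)
      obtain ⟨j, hj, hje⟩ := hπ1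
      obtain ⟨k, hk, hke⟩ := hπ2
      exact key_comm X J (hsurj (Fin.last t)) g₁.2 g₂.2 hj hk
        (fun i => congrFun hje i) (fun i => congrFun hke i)
    exact Subgroup.mem_subgroupOf.1 (hDle hg)

/-- If `J` is a subgroup of a finite direct product
`Y = X₁ × ⋯ × X_t` projecting onto every factor, then `N_Y(J)/J` is solvable. -/
theorem normalizer_quotient_isSolvable
    {t : ℕ} (X : Fin t → Type*) [∀ i, Group (X i)] [∀ i, Finite (X i)]
    (J : Subgroup (∀ i, X i))
    (hsurj : ∀ i, J.map (Pi.evalMonoidHom X i) = ⊤) :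
    Group.IsSolvable (↥(Subgroup.normalizer (J : Set (∀ i, X i))) ⧸
      J.subgroupOf (Subgroup.normalizer (J : Set (∀ i, X i)))) := by
  obtain ⟨n, hn⟩ := derived_le t X J hsurj
  have hle : derivedSeries (↥(Subgroup.normalizer (J : Set (∀ i, X i)))) n ≤ J.subgroupOf (Subgroup.normalizer (J : Set (∀ i, X i))) := fun g hg =>
    Subgroup.mem_subgroupOf.2 (hn g hg)
  refine ⟨⟨n, ?_⟩⟩
  rw [eq_bot_iff]
  calc derivedSeries (↥(Subgroup.normalizer (J : Set (∀ i, X i))) ⧸ J.subgroupOf (Subgroup.normalizer (J : Set (∀ i, X i)))) n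
      = (derivedSeries (↥(Subgroup.normalizer (J : Set (∀ i, X i)))) n).map (QuotientGroup.mk' (J.subgroupOf (Subgroup.normalizer (J : Set (∀ i, X i))))) :=
        (map_derivedSeries_eq (QuotientGroup.mk'_surjective _) n).symm
    _ ≤ (J.subgroupOf (Subgroup.normalizer (J : Set (∀ i, X i)))).map (QuotientGroup.mk' (J.subgroupOf (Subgroup.normalizer (J : Set (∀ i, X i))))) :=
        Subgroup.map_mono hle
    _ ≤ ⊥ := by
        rintro x ⟨y, hy, rfl⟩
        simpa using (QuotientGroup.eq_one_iff y).2 hy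
end

section
/- Let G be a finite group, let G = G₀ ⊵ G₁ ⊵ ⋯ ⊵ G_r = 1 be a normal series with each Gᵢ normal in G, and let p be a prime. Suppose for each i that Iᵢ is an intravariant p′-subgroup of Gᵢ₋₁/Gᵢ. Then G has a p′-subgroup H with |H| ≥ ∏ᵢ |Iᵢ|. -/
/-- A subgroup `I ≤ X` is *intravariant* if every automorphism of `X` maps `I`
to a conjugate of `I`. -/
def IsIntravariant {X : Type*} [Group X] (I : Subgroup X) : Prop :=
  ∀ α : MulAut X, ∃ x : X, I.map α.toMonoidHom = I.map (MulAut.conj x).toMonoidHom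

open Subgroup

private lemma suzuki_map_aut_mul {N : Type*} [Group N] (I : Subgroup N) (α β : MulAut N) :
    I.map (α * β).toMonoidHom = (I.map β.toMonoidHom).map α.toMonoidHom := by
  rw [map_map]; rfl

private lemma suzuki_map_aut_one {N : Type*} [Group N] (I : Subgroup N) :
    I.map (1 : MulAut N).toMonoidHom = I := by
  have : (1 : MulAut N).toMonoidHom = MonoidHom.id N := rfl
  rw [this, Subgroup.map_id]

/-- Intravariance transfers along group isomorphisms. -/
private lemma IsIntravariant.map_equiv {X Y : Type*} [Group X] [Group Y] {I : Subgroup X}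
    (hI : IsIntravariant I) (e : X ≃* Y) : IsIntravariant (I.map e.toMonoidHom) := by
  intro α
  set β : MulAut X := ((e.trans α).trans e.symm : X ≃* X) with hβ
  obtain ⟨x, hx⟩ := hI β
  refine ⟨e x, ?_⟩
  have h1 : α.toMonoidHom.comp e.toMonoidHom = e.toMonoidHom.comp β.toMonoidHom := by
    ext a; simp [hβ]
  have h2 : (MulAut.conj (e x)).toMonoidHom.comp e.toMonoidHom
      = e.toMonoidHom.comp (MulAut.conj x).toMonoidHom := by
    ext a; simp [MulAut.conj_apply, map_mul]
  rw [map_map, h1, ← map_map, hx, map_map, ← h2, ← map_map]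

/-- Any finite group with a normal subgroup of `p'` index has a `p'` subgroup of
order at least that index. -/
private lemma suzuki_lemL : ∀ (n : ℕ) (X : Type*) (_ : Group X) (_ : Finite X) (p : ℕ)
    (_ : Fact p.Prime) (K : Subgroup X) (_ : K.Normal), Nat.card X ≤ n → ¬ p ∣ K.index →
    ∃ S : Subgroup X, ¬ p ∣ Nat.card S ∧ K.index ≤ Nat.card S := by
  intro n
  induction n with
  | zero =>
    intro X _ _ p _ K _ hn _
    have : 0 < Nat.card X := Nat.card_pos
    omega
  | succ n ih =>
    intro X _ _ p hpf K hKnorm hn hpi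
    let P : Sylow p X := default
    have hPK : (P : Subgroup X) ≤ K := by
      have hmap : IsPGroup p ((P : Subgroup X).map (QuotientGroup.mk' K)) :=
        P.2.map (QuotientGroup.mk' K)
      obtain ⟨k, hk⟩ := hmap.exists_card_eq
      have hdvd : Nat.card ((P : Subgroup X).map (QuotientGroup.mk' K)) ∣ K.index := by
        have := Subgroup.card_subgroup_dvd_card ((P : Subgroup X).map (QuotientGroup.mk' K))
        simpa [Subgroup.index] using this
      have hk0 : k = 0 := by
        by_contra hk0
        exact hpi (dvd_trans (dvd_pow_self p hk0) (hk ▸ hdvd))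
      have hbot : (P : Subgroup X).map (QuotientGroup.mk' K) = ⊥ := by
        have : Nat.card ((P : Subgroup X).map (QuotientGroup.mk' K)) = 1 := by
          rw [hk, hk0, pow_zero]
        exact Subgroup.eq_bot_of_card_eq _ this
      rw [Subgroup.map_eq_bot_iff, QuotientGroup.ker_mk'] at hbot
      exact hbot
    have hPidx : ¬ p ∣ (P : Subgroup X).index := by
      refine P.not_dvd_index' ?_
      exact Subgroup.index_ne_zero_of_finite
    by_cases hPn : (P : Subgroup X).Normal
    · obtain ⟨k, hk⟩ := P.2.exists_card_eq
      have hco : Nat.Coprime (Nat.card (P : Subgroup X)) (P : Subgroup X).index := by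
        rw [hk]
        exact Nat.Coprime.pow_left k (hpf.out.coprime_iff_not_dvd.mpr hPidx)
      obtain ⟨H, hH⟩ := Subgroup.exists_right_complement'_of_coprime hco
      have hcard : Nat.card (P : Subgroup X) * Nat.card H = Nat.card X := hH.card_mul
      have hcard2 : Nat.card (P : Subgroup X) * (P : Subgroup X).index = Nat.card X :=
        Subgroup.card_mul_index _
      have hPpos : 0 < Nat.card (P : Subgroup X) := Nat.card_pos
      have hHcard : Nat.card H = (P : Subgroup X).index :=
        Nat.eq_of_mul_eq_mul_left hPpos (hcard.trans hcard2.symm)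
      refine ⟨H, ?_, ?_⟩
      · rw [hHcard]; exact hPidx
      · rw [hHcard]
        exact Nat.le_of_dvd (Nat.pos_of_ne_zero Subgroup.index_ne_zero_of_finite)
          (Subgroup.index_dvd_of_le hPK)
    · set R := Subgroup.normalizer ((P : Subgroup X) : Set X) with hR
      have hRtop : R ≠ ⊤ := fun h => hPn ((Subgroup.normalizer_eq_top_iff).mp h)
      have hsup : R ⊔ K = ⊤ := Sylow.normalizer_sup_eq_top' P hPK
      have hRcard : Nat.card R < Nat.card X := by
        rcases lt_or_eq_of_le (Subgroup.card_le_card_group R) with h | h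
        · exact h
        · exact absurd (Subgroup.eq_top_of_card_eq R h) hRtop
      have hKR : (K.subgroupOf R).Normal := hKnorm.subgroupOf R
      have hidx : (K.subgroupOf R).index = K.index := by
        have h1 : K.relIndex R = K.relIndex (R ⊔ K) := (Subgroup.relIndex_sup_right R K).symm
        rw [show (K.subgroupOf R).index = K.relIndex R from rfl, h1, hsup,
          Subgroup.relIndex_top_right]
      obtain ⟨S', hS'p, hS'c⟩ := ih R inferInstance inferInstance p hpf (K.subgroupOf R) hKR
        (by omega) (by rw [hidx]; exact hpi)
      refine ⟨S'.map R.subtype, ?_, ?_⟩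
      · rwa [Nat.card_congr (Subgroup.equivMapOfInjective S' R.subtype
          R.subtype_injective).toEquiv.symm]
      · rw [← hidx]
        calc (K.subgroupOf R).index ≤ Nat.card S' := hS'c
        _ = _ := Nat.card_congr (Subgroup.equivMapOfInjective S' R.subtype
            R.subtype_injective).toEquiv

/-- Frattini-type argument for intravariant subgroups. -/
private lemma suzuki_frattini {G : Type*} [Group G] {N : Subgroup G} [N.Normal]
    {I : Subgroup N} (hI : IsIntravariant I) :
    Subgroup.normalizer ((I.map N.subtype : Subgroup G) : Set G) ⊔ N = ⊤ := by
  rw [eq_top_iff]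
  intro g _
  obtain ⟨x, hx⟩ := hI (MulAut.conjNormal g)
  set c : G := (↑x)⁻¹ * g with hc
  have Ieq : I.map (MulAut.conjNormal c).toMonoidHom = I := by
    have h1 : MulAut.conjNormal c = (MulAut.conj x)⁻¹ * (MulAut.conjNormal g : MulAut N) := by
      rw [hc, map_mul]
      congr 1
      have h : ((↑x)⁻¹ : G) = ((x⁻¹ : N) : G) := rfl
      rw [h, MulAut.conjNormal_val, map_inv]
    rw [h1, suzuki_map_aut_mul, hx, ← suzuki_map_aut_mul, inv_mul_cancel, suzuki_map_aut_one]
  have Ieq' : I.map (MulAut.conjNormal c⁻¹).toMonoidHom = I := by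
    have h1 : MulAut.conjNormal c⁻¹ = (MulAut.conjNormal c : MulAut N)⁻¹ := map_inv _ c
    conv_lhs => rw [h1, ← Ieq, ← suzuki_map_aut_mul, inv_mul_cancel, suzuki_map_aut_one]
  have step : ∀ (c' : G), I.map (MulAut.conjNormal c').toMonoidHom = I →
      ∀ y ∈ I.map N.subtype, c' * y * c'⁻¹ ∈ I.map N.subtype := by
    rintro c' h y ⟨i, hi, rfl⟩
    refine ⟨(MulAut.conjNormal c') i, ?_, ?_⟩
    · rw [← h]; exact mem_map_of_mem _ hi
    · exact MulAut.conjNormal_apply c' i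
  have hcmem : c ∈ Subgroup.normalizer ((I.map N.subtype : Subgroup G) : Set G) := by
    rw [Subgroup.mem_normalizer_iff]
    intro y
    constructor
    · exact fun hy => step c Ieq y hy
    · intro hy
      have := step c⁻¹ Ieq' _ hy
      simpa [mul_assoc] using this
  have : g = ↑x * c := by rw [hc]; group
  rw [this, sup_comm]
  exact Subgroup.mul_mem_sup x.2 hcmem

/-- Key lifting step: an intravariant `p'`-subgroup of a normal subgroup combines with a
`p'`-subgroup of the quotient. -/
private lemma suzuki_lemM {G : Type*} [Group G] [Finite G] (p : ℕ) (hp : Fact p.Prime)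
    (N : Subgroup G) [N.Normal] (I : Subgroup N)
    (hIp : ¬ p ∣ Nat.card I) (hIintra : IsIntravariant I)
    (Q : Subgroup (G ⧸ N)) (hQp : ¬ p ∣ Nat.card Q) :
    ∃ S : Subgroup G, ¬ p ∣ Nat.card S ∧ Nat.card I * Nat.card Q ≤ Nat.card S := by
  classical
  set J : Subgroup G := I.map N.subtype with hJ
  set K : Subgroup G := Q.comap (QuotientGroup.mk' N) with hK
  set C : Subgroup G := Subgroup.normalizer (J : Set G) ⊓ K with hC
  have hJN : J ≤ N := map_subtype_le I
  have hNK : N ≤ K := by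
    intro n hn
    simp only [hK, mem_comap]
    have : QuotientGroup.mk' N n = 1 := (QuotientGroup.eq_one_iff n).mpr hn
    rw [this]; exact one_mem Q
  have hfrat : Subgroup.normalizer (J : Set G) ⊔ N = ⊤ := suzuki_frattini hIintra
  have hsurj : ∀ q : Q, ∃ c : C, QuotientGroup.mk' N c = q := by
    intro q
    obtain ⟨k, hk⟩ := QuotientGroup.mk'_surjective N q
    have hkK : k ∈ K := by rw [hK, mem_comap, hk]; exact q.2
    have hkmem : k ∈ (↑(Subgroup.normalizer (J : Set G) ⊔ N) : Set G) := by rw [hfrat]; trivial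
    rw [Subgroup.mul_normal (Subgroup.normalizer (J : Set G)) N] at hkmem
    obtain ⟨h, hh, n, hn, rfl⟩ := hkmem
    have hhK : h ∈ K := by
      have : (n : G) ∈ K := hNK hn
      have := mul_mem hkK (inv_mem this)
      simpa [mul_assoc] using this
    refine ⟨⟨h, mem_inf.mpr ⟨hh, hhK⟩⟩, ?_⟩
    have hn1 : QuotientGroup.mk' N n = 1 := (QuotientGroup.eq_one_iff n).mpr hn
    have : QuotientGroup.mk' N (h * n) = QuotientGroup.mk' N h := by
      rw [map_mul, hn1, mul_one]
    rw [← hk, this]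
  have hmemQ : ∀ c : C, (QuotientGroup.mk' N).comp C.subtype c ∈ Q := by
    intro c
    exact mem_comap.mp c.2.2
  set ψ : ↥C →* ↥Q := ((QuotientGroup.mk' N).comp C.subtype).codRestrict Q hmemQ with hψ
  have hψsurj : Function.Surjective ψ := by
    intro q
    obtain ⟨c, hc⟩ := hsurj q
    exact ⟨c, Subtype.ext hc⟩
  set J' : Subgroup ↥C := J.subgroupOf C with hJ'
  have hJ'n : J'.Normal := by
    constructor
    intro j hj c
    exact (Subgroup.mem_normalizer_iff.mp c.2.1 j).mp hj
  haveI := hJ'n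
  have hJker : ∀ x ∈ J', ψ x = 1 := by
    intro x hxj
    have hxN : (x : G) ∈ N := hJN hxj
    apply Subtype.ext
    show QuotientGroup.mk' N (x : G) = 1
    exact (QuotientGroup.eq_one_iff _).mpr hxN
  set ψ' : (↥C ⧸ J') →* ↥Q := QuotientGroup.lift J' ψ hJker with hψ'
  have hψ'surj : Function.Surjective ψ' := by
    intro q
    obtain ⟨c, hc⟩ := hψsurj q
    exact ⟨QuotientGroup.mk c, hc⟩
  have hidx : ψ'.ker.index = Nat.card Q := by
    rw [Subgroup.index_ker, MonoidHom.range_eq_top_of_surjective ψ' hψ'surj]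
    exact Subgroup.card_top
  obtain ⟨S', hS'p, hS'c⟩ := suzuki_lemL (Nat.card (↥C ⧸ J')) (↥C ⧸ J') inferInstance
    inferInstance p hp ψ'.ker inferInstance le_rfl (by rw [hidx]; exact hQp)
  set S₁ : Subgroup ↥C := S'.comap (QuotientGroup.mk' J') with hS₁
  set χ : ↥S₁ →* (↥C ⧸ J') := (QuotientGroup.mk' J').comp S₁.subtype with hχ
  have hχrange : χ.range = S' := by
    rw [hχ, MonoidHom.range_comp, Subgroup.range_subtype, hS₁,
      Subgroup.map_comap_eq_self_of_surjective (QuotientGroup.mk'_surjective J')]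
  have hχker : χ.ker = J'.subgroupOf S₁ := by
    rw [hχ, ← MonoidHom.comap_ker, QuotientGroup.ker_mk']
    rfl
  have hJ'S₁ : J' ≤ S₁ := by
    intro x hx
    rw [hS₁, mem_comap]
    have : QuotientGroup.mk' J' x = 1 := (QuotientGroup.eq_one_iff _).mpr hx
    rw [this]; exact one_mem S'
  have hJC : J ≤ C := le_inf Subgroup.le_normalizer (le_trans hJN hNK)
  have hcardker : Nat.card χ.ker = Nat.card I := by
    rw [hχker]
    have e1 : Nat.card (J'.subgroupOf S₁) = Nat.card J' :=
      Nat.card_congr (Subgroup.subgroupOfEquivOfLe hJ'S₁).toEquiv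
    have e2 : Nat.card J' = Nat.card J :=
      Nat.card_congr (Subgroup.subgroupOfEquivOfLe hJC).toEquiv
    have e3 : Nat.card J = Nat.card I :=
      (Nat.card_congr (Subgroup.equivMapOfInjective I N.subtype N.subtype_injective).toEquiv).symm
    rw [e1, e2, e3]
  have hcardq : Nat.card (↥S₁ ⧸ χ.ker) = Nat.card S' := by
    rw [Nat.card_congr (QuotientGroup.quotientKerEquivRange χ).toEquiv, hχrange]
  have hcardS₁ : Nat.card S₁ = Nat.card S' * Nat.card I := by
    rw [Subgroup.card_eq_card_quotient_mul_card_subgroup χ.ker, hcardq, hcardker]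
  refine ⟨S₁.map C.subtype, ?_, ?_⟩
  · rw [← Nat.card_congr (Subgroup.equivMapOfInjective S₁ C.subtype C.subtype_injective).toEquiv,
      hcardS₁]
    intro hdvd
    rcases (Nat.Prime.dvd_mul hp.out).mp hdvd with h | h
    · exact hS'p h
    · exact hIp h
  · rw [← Nat.card_congr (Subgroup.equivMapOfInjective S₁ C.subtype C.subtype_injective).toEquiv,
      hcardS₁, mul_comm (Nat.card S') (Nat.card I)]
    have : Nat.card Q ≤ Nat.card S' := by rw [← hidx]; exact hS'c
    exact Nat.mul_le_mul_left _ this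

/-- Third isomorphism theorem, relative form. -/
private noncomputable def suzukiThirdIso {G : Type*} [Group G] (N A B : Subgroup G) [N.Normal]
    (hNB : N ≤ B) (_hBA : B ≤ A)
    [h1 : (B.subgroupOf A).Normal]
    [h2 : (((B.map (QuotientGroup.mk' N)).subgroupOf (A.map (QuotientGroup.mk' N)))).Normal] :
    (↥A ⧸ B.subgroupOf A) ≃*
      (↥(A.map (QuotientGroup.mk' N)) ⧸
        (B.map (QuotientGroup.mk' N)).subgroupOf (A.map (QuotientGroup.mk' N))) := by
  set f : ↥A →* (↥(A.map (QuotientGroup.mk' N)) ⧸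
      (B.map (QuotientGroup.mk' N)).subgroupOf (A.map (QuotientGroup.mk' N))) :=
    (QuotientGroup.mk' _).comp ((QuotientGroup.mk' N).subgroupMap A) with hf
  have hfsurj : Function.Surjective f :=
    (QuotientGroup.mk'_surjective _).comp ((QuotientGroup.mk' N).subgroupMap_surjective A)
  have hker : f.ker = B.subgroupOf A := by
    ext x
    rw [hf, MonoidHom.mem_ker, MonoidHom.comp_apply, ← MonoidHom.mem_ker, QuotientGroup.ker_mk']
    show ((QuotientGroup.mk' N).subgroupMap A x : G ⧸ N) ∈ B.map (QuotientGroup.mk' N) ↔ _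
    constructor
    · rintro ⟨b, hb, hbx⟩
      have hbx' : ((b : G ⧸ N)) = (((x : G) : G ⧸ N)) := hbx
      have hmem : b⁻¹ * (x : G) ∈ N := by rwa [QuotientGroup.eq] at hbx'
      have hx : (x : G) = b * (b⁻¹ * (x : G)) := by group
      show (x : G) ∈ B
      rw [hx]
      exact mul_mem hb (hNB hmem)
    · intro hx
      exact ⟨(x : G), hx, rfl⟩
  exact (QuotientGroup.quotientMulEquivOfEq hker.symm).trans
    (QuotientGroup.quotientKerEquivOfSurjective f hfsurj)

private lemma suzuki_aux : ∀ (r : ℕ) (G : Type*) (_ : Group G) (_ : Finite G) (p : ℕ)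
    (_ : Fact p.Prime) (s : Fin (r + 1) → Subgroup G)
    (_ : s 0 = ⊥) (_ : s (Fin.last r) = ⊤)
    (hle : ∀ i : Fin r, s i.castSucc ≤ s i.succ)
    (hnorm : ∀ i : Fin (r + 1), (s i).Normal)
    (I : ∀ i : Fin r,
      haveI : ((s i.castSucc).subgroupOf (s i.succ)).Normal :=
        (hnorm i.castSucc).subgroupOf _
      Subgroup (↥(s i.succ) ⧸ (s i.castSucc).subgroupOf (s i.succ)))
    (_ : ∀ i : Fin r, ¬ p ∣ Nat.card (I i))
    (_ : ∀ i : Fin r,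
      haveI : ((s i.castSucc).subgroupOf (s i.succ)).Normal :=
        (hnorm i.castSucc).subgroupOf _
      IsIntravariant (I i)),
    ∃ Hs : Subgroup G, ¬ p ∣ Nat.card Hs ∧
      ∏ i : Fin r, Nat.card (I i) ≤ Nat.card Hs := by
  intro r
  induction r with
  | zero =>
    intro G _ _ p hp s h0 htop hle hnorm I hIp hIintra
    refine ⟨⊥, ?_, ?_⟩
    · rw [Subgroup.card_bot]
      simpa using hp.out.ne_one
    · simp [Subgroup.card_bot]
  | succ n ih =>
    intro G _ _ p hp s h0 htop hle hnorm I hIp hIintra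
    have hmono : Monotone s := Fin.monotone_iff_le_succ.mpr hle
    set N : Subgroup G := s ((0 : Fin (n + 1)).succ) with hN
    haveI : N.Normal := hnorm _
    -- transport I 0 to a subgroup of N
    haveI hn0 : ((s (0 : Fin (n + 1)).castSucc).subgroupOf N).Normal :=
      (hnorm _).subgroupOf _
    have h00 : s (0 : Fin (n + 1)).castSucc = (⊥ : Subgroup G) := by
      rw [Fin.castSucc_zero, h0]
    have hsub : (s (0 : Fin (n + 1)).castSucc).subgroupOf N = (⊥ : Subgroup ↥N) := by
      rw [h00]
      ext x
      simp [Subgroup.mem_subgroupOf]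
    set e₀ : (↥N ⧸ (s (0 : Fin (n + 1)).castSucc).subgroupOf N) ≃* ↥N :=
      (QuotientGroup.quotientMulEquivOfEq hsub).trans QuotientGroup.quotientBot with he₀
    set I₀ : Subgroup ↥N := (I 0).map e₀.toMonoidHom with hI₀
    have hI₀card : Nat.card I₀ = Nat.card (I 0) :=
      (Nat.card_congr (Subgroup.equivMapOfInjective (I 0) e₀.toMonoidHom
        e₀.injective).toEquiv).symm
    have hI₀p : ¬ p ∣ Nat.card I₀ := by rw [hI₀card]; exact hIp 0
    have hI₀intra : IsIntravariant I₀ := (hIintra 0).map_equiv e₀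
    -- the quotient series
    set t : Fin (n + 1) → Subgroup (G ⧸ N) :=
      fun j => (s j.succ).map (QuotientGroup.mk' N) with ht
    have ht0 : t 0 = ⊥ := by
      show (s (0 : Fin (n + 1)).succ).map (QuotientGroup.mk' N) = ⊥
      rw [Subgroup.map_eq_bot_iff, QuotientGroup.ker_mk']
    have httop : t (Fin.last n) = ⊤ := by
      show (s (Fin.last n).succ).map (QuotientGroup.mk' N) = ⊤
      rw [show (Fin.last n).succ = Fin.last (n + 1) from Fin.succ_last n, htop,
        ← MonoidHom.range_eq_map]
      exact MonoidHom.range_eq_top_of_surjective _ (QuotientGroup.mk'_surjective N)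
    have hle' : ∀ j : Fin n, t j.castSucc ≤ t j.succ := by
      intro j
      exact Subgroup.map_mono (hmono (by simp [Fin.le_def]))
    have hnorm' : ∀ j : Fin (n + 1), (t j).Normal :=
      fun j => (hnorm j.succ).map _ (QuotientGroup.mk'_surjective N)
    have hNle : ∀ j : Fin n, N ≤ s j.succ.castSucc := by
      intro j
      rw [hN]
      exact hmono (by simp [Fin.le_def])
    have hseq : ∀ j : Fin n, s j.succ.castSucc = s j.castSucc.succ :=
      fun j => congrArg s (Fin.succ_castSucc j).symm
    haveI hinst1 : ∀ j : Fin n,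
        ((s j.succ.castSucc).subgroupOf (s j.succ.succ)).Normal :=
      fun j => (hnorm _).subgroupOf _
    haveI hinst2 : ∀ j : Fin n,
        (((s j.succ.castSucc).map (QuotientGroup.mk' N)).subgroupOf
          ((s j.succ.succ).map (QuotientGroup.mk' N))).Normal :=
      fun j => ((hnorm _).map _ (QuotientGroup.mk'_surjective N)).subgroupOf _
    haveI hinst3 : ∀ j : Fin n, ((t j.castSucc).subgroupOf (t j.succ)).Normal :=
      fun j => (hnorm' j.castSucc).subgroupOf _
    have hBeq : ∀ j : Fin n,
        ((s j.succ.castSucc).map (QuotientGroup.mk' N)).subgroupOf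
          ((s j.succ.succ).map (QuotientGroup.mk' N))
          = (t j.castSucc).subgroupOf (t j.succ) := by
      intro j
      show _ = ((s j.castSucc.succ).map (QuotientGroup.mk' N)).subgroupOf
        ((s j.succ.succ).map (QuotientGroup.mk' N))
      rw [hseq j]
    let Φ : ∀ j : Fin n,
        (↥(s j.succ.succ) ⧸ (s j.succ.castSucc).subgroupOf (s j.succ.succ)) ≃*
          (↥(t j.succ) ⧸ (t j.castSucc).subgroupOf (t j.succ)) := fun j =>
      haveI := hinst1 j
      haveI := hinst2 j
      haveI := hinst3 j
      (suzukiThirdIso N (s j.succ.succ) (s j.succ.castSucc) (hNle j) (hle j.succ)).trans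
        (QuotientGroup.quotientMulEquivOfEq (hBeq j))
    set I' : ∀ j : Fin n, Subgroup (↥(t j.succ) ⧸ (t j.castSucc).subgroupOf (t j.succ)) :=
      fun j => (I j.succ).map (Φ j).toMonoidHom with hI'
    have hI'card : ∀ j : Fin n, Nat.card (I' j) = Nat.card (I j.succ) := fun j =>
      (Nat.card_congr (Subgroup.equivMapOfInjective (I j.succ) (Φ j).toMonoidHom
        (Φ j).injective).toEquiv).symm
    have hI'p : ∀ j : Fin n, ¬ p ∣ Nat.card (I' j) := by
      intro j; rw [hI'card j]; exact hIp j.succ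
    have hI'intra : ∀ j : Fin n, IsIntravariant (I' j) :=
      fun j => (hIintra j.succ).map_equiv (Φ j)
    obtain ⟨Q, hQp, hQc⟩ := ih (G ⧸ N) inferInstance inferInstance p hp t ht0 httop hle'
      hnorm' I' hI'p hI'intra
    obtain ⟨S, hSp, hSc⟩ := suzuki_lemM p hp N I₀ hI₀p hI₀intra Q hQp
    refine ⟨S, hSp, ?_⟩
    calc ∏ i : Fin (n + 1), Nat.card (I i)
        = Nat.card (I 0) * ∏ j : Fin n, Nat.card (I j.succ) := by
          rw [Fin.prod_univ_succ]
      _ = Nat.card I₀ * ∏ j : Fin n, Nat.card (I' j) := by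
          rw [hI₀card]
          congr 1
          exact Finset.prod_congr rfl fun j _ => (hI'card j).symm
      _ ≤ Nat.card I₀ * Nat.card Q := Nat.mul_le_mul_left _ hQc
      _ ≤ Nat.card S := hSc


/-- Let `G` be a finite group with a normal series
`G = G₀ ⊵ G₁ ⊵ ⋯ ⊵ G_r = 1` (each term normal in `G`), `p` a prime, and for
each `i` let `Iᵢ` be an intravariant `p'`-subgroup of the factor `Gᵢ₋₁/Gᵢ`.
Then `G` has a `p'`-subgroup `H` with `∏ᵢ |Iᵢ| ≤ |H|`. -/
theorem exists_pPrime_subgroup_of_intravariant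
    {G : Type*} [Group G] [Finite G] (p : ℕ) (hp : p.Prime) (r : ℕ)
    (s : Fin (r + 1) → Subgroup G)
    (h0 : s 0 = ⊥) (htop : s (Fin.last r) = ⊤)
    (hle : ∀ i : Fin r, s i.castSucc ≤ s i.succ)
    (hnorm : ∀ i : Fin (r + 1), (s i).Normal)
    (I : ∀ i : Fin r,
      haveI : ((s i.castSucc).subgroupOf (s i.succ)).Normal :=
        (hnorm i.castSucc).subgroupOf _
      Subgroup (↥(s i.succ) ⧸ (s i.castSucc).subgroupOf (s i.succ)))
    (hIp : ∀ i : Fin r, ¬ p ∣ Nat.card (I i))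
    (hIintra : ∀ i : Fin r,
      haveI : ((s i.castSucc).subgroupOf (s i.succ)).Normal :=
        (hnorm i.castSucc).subgroupOf _
      IsIntravariant (I i)) :
    ∃ Hs : Subgroup G, ¬ p ∣ Nat.card Hs ∧
      ∏ i : Fin r, Nat.card (I i) ≤ Nat.card Hs := by
  exact suzuki_aux r G inferInstance inferInstance p ⟨hp⟩ s h0 htop hle hnorm I hIp hIintra
end
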